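/- Let λ > 0, let x₁, x₂, …, x_t ∈ ℝ^N, and define V₀ = λI and Vᵢ = V_{i−1} + xᵢxᵢᵀ for i = 1,…,t. Then Σ_{i=1}^{t} min{1, xᵢᵀ V_{i−1}^{−1} xᵢ} ≤ 2·log(det(V_t)/det(λI)). -/

import Mathlib

open Matrix

lemma min_one_le_two_log (u : ℝ) (hu : 0 ≤ u) : min 1 u ≤ 2 * Real.log (1 + u) := by
  have h1u : (0:ℝ) < 1 + u := by linarith
  -- log (1+u) ≥ u / (1+u)
  have key : u / (1 + u) ≤ Real.log (1 + u) := by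
    have h := Real.log_le_sub_one_of_pos (x := (1 + u)⁻¹) (by positivity)
    rw [Real.log_inv] at h
    have : (1 + u)⁻¹ - 1 = -(u / (1 + u)) := by
      field_simp
      ring
    rw [this] at h
    linarith
  rcases le_total u 1 with h | h
  · rw [min_eq_right h]
    have : u / 2 ≤ u / (1 + u) := by
      apply div_le_div_of_nonneg_left hu h1u
      linarith
    linarith
  · rw [min_eq_left h]
    have h2 : Real.log 2 ≤ Real.log (1 + u) :=
      Real.log_le_log (by norm_num) (by linarith)
    have h3 : (1:ℝ) / (1 + 1) ≤ Real.log (1 + 1) := by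
      have := key  -- not usable directly; redo for u = 1
      have h := Real.log_le_sub_one_of_pos (x := (2:ℝ)⁻¹) (by norm_num)
      rw [Real.log_inv] at h
      norm_num at h ⊢
      linarith
    norm_num at h3
    linarith

/-- Let `λ > 0`, let `x₁, …, x_t ∈ ℝ^N`, and define `V₀ = λI` and
`Vᵢ = V_{i−1} + xᵢxᵢᵀ`. Then `∑_{i=1}^t min{1, xᵢᵀ V_{i−1}⁻¹ xᵢ} ≤ 2·log(det(V_t)/det(λI))`.
(Here `x 0, …, x (t-1)` play the roles of `x₁, …, x_t`.) -/
theorem statement3 {N : ℕ} (lam : ℝ) (hlam : 0 < lam) (t : ℕ) (x : ℕ → Fin N → ℝ)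
    (V : ℕ → Matrix (Fin N) (Fin N) ℝ)
    (hV0 : V 0 = lam • (1 : Matrix (Fin N) (Fin N) ℝ))
    (hV : ∀ i, V (i + 1) = V i + Matrix.vecMulVec (x i) (x i)) :
    ∑ i ∈ Finset.range t, min 1 (x i ⬝ᵥ ((V i)⁻¹ *ᵥ x i)) ≤
      2 * Real.log ((V t).det / (lam • (1 : Matrix (Fin N) (Fin N) ℝ)).det) := by
  -- positive definiteness of each V i
  have hVpos : ∀ i, (V i).PosDef := by
    intro i
    induction i with
    | zero =>
      rw [hV0]
      refine Matrix.PosDef.of_dotProduct_mulVec_pos ?_ (fun v hv => ?_)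
      · unfold Matrix.IsHermitian
        simp [conjTranspose_smul, Matrix.conjTranspose_one]
      · have : (lam • (1 : Matrix (Fin N) (Fin N) ℝ)) *ᵥ v = lam • v := by
          simp [smul_mulVec]
        rw [this]
        have hvv : 0 < v ⬝ᵥ v := by
          have := (dotProduct_star_self_pos_iff (v := v)).2 hv
          simpa using this
        have : star v ⬝ᵥ lam • v = lam * (v ⬝ᵥ v) := by
          simp [dotProduct_smul]
        rw [this]
        positivity
    | succ n ih =>
      rw [hV n]
      refine ih.add_posSemidef ?_
      have : Matrix.vecMulVec (x n) (x n) =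
          (Matrix.replicateRow Unit (x n))ᴴ * Matrix.replicateRow Unit (x n) := by
        ext i j
        simp [Matrix.vecMulVec_apply, Matrix.mul_apply, mul_comm]
      rw [this]
      exact posSemidef_conjTranspose_mul_self _
  -- nonnegativity of the quadratic forms
  have hquad : ∀ i, 0 ≤ x i ⬝ᵥ ((V i)⁻¹ *ᵥ x i) := by
    intro i
    have h := ((hVpos i).inv).posSemidef.dotProduct_mulVec_nonneg (x i)
    simpa using h
  -- determinant recursion
  have hdet : ∀ i, (V (i + 1)).det = (V i).det * (1 + x i ⬝ᵥ ((V i)⁻¹ *ᵥ x i)) := by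
    intro i
    rw [hV i, Matrix.vecMulVec_eq Unit,
      Matrix.det_add_replicateCol_mul_replicateRow (hVpos i).det_pos.ne'.isUnit]
    congr 1
    have hT : ((V i)⁻¹)ᵀ = (V i)⁻¹ := by
      ext a b
      rw [Matrix.transpose_apply]
      simpa using (((hVpos i).inv).isHermitian.apply a b)
    rw [Matrix.det_unique, Matrix.add_apply, Matrix.one_apply_eq,
      ← Matrix.replicateRow_vecMul, Matrix.replicateRow_mul_replicateCol_apply, ← hT, Matrix.mulVec_transpose,
      dotProduct_comm ((x i) ᵥ* (V i)⁻¹ᵀ), hT]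
  have hdetpos : ∀ i, 0 < (V i).det := fun i => (hVpos i).det_pos
  have hD : 0 < (lam • (1 : Matrix (Fin N) (Fin N) ℝ)).det := by
    rw [← hV0]; exact hdetpos 0
  -- main induction
  induction t with
  | zero =>
    rw [Finset.sum_range_zero, hV0, div_self hD.ne']
    simp
  | succ n ih =>
    rw [Finset.sum_range_succ]
    have h1 : 0 < 1 + x n ⬝ᵥ ((V n)⁻¹ *ᵥ x n) := by
      have := hquad n; linarith
    have hlog : Real.log ((V (n + 1)).det / (lam • (1 : Matrix (Fin N) (Fin N) ℝ)).det)
        = Real.log ((V n).det / (lam • (1 : Matrix (Fin N) (Fin N) ℝ)).det)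
          + Real.log (1 + x n ⬝ᵥ ((V n)⁻¹ *ᵥ x n)) := by
      rw [hdet n, mul_comm, mul_div_assoc, Real.log_mul h1.ne' (div_pos (hdetpos n) hD).ne', add_comm]
    rw [hlog, mul_add]
    have := min_one_le_two_log _ (hquad n)
    linarith
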